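/- arXiv:math/0303095 — 2 statements merged into one kernel-verified Lean document; each statement's English description precedes it below -/
import Mathlib

section
/- Let G be a real symmetric 2×2 matrix with det G < 0, so that g(u,v) = uᵀGv is a Lorentzian inner product on ℝ², and let A be a real 2×2 matrix with AᵀG = GA and det A = 1. If tr A = −2 and A ≠ −1 (minus the identity matrix), then there is no real 2×2 matrix a with aᵀG = Ga and exp(a) = A (no geodesic joins g and g(A·,·) in the space of Lorentzian inner products with fixed volume form). -/
set_option maxHeartbeats 1600000
open Matrix NormedSpace

private abbrev M2 := Matrix (Fin 2) (Fin 2) ℂ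

private lemma pow_idem {R : Type*} [Monoid R] {p : R} (hp : p * p = p) :
    ∀ n : ℕ, p ^ (n + 1) = p := by
  intro n
  induction n with
  | zero => simp
  | succ k ih => rw [pow_succ, ih, hp]

private lemma exp_smul_idem {p : M2} (hp : p * p = p) (c : ℂ) :
    exp (c • p) = 1 + (Complex.exp c - 1) • p := by
  letI : SeminormedRing M2 := Matrix.linftyOpSemiNormedRing
  letI : NormedRing M2 := Matrix.linftyOpNormedRing
  letI : NormedAlgebra ℂ M2 := Matrix.linftyOpNormedAlgebra
  have hu : Summable fun n : ℕ => (n.factorial : ℂ)⁻¹ * c ^ n := by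
    simpa [smul_eq_mul] using expSeries_summable' (𝕂 := ℂ) (𝔸 := ℂ) c
  have hu1 : Summable fun n : ℕ => ((n + 1).factorial : ℂ)⁻¹ * c ^ (n + 1) :=
    (summable_nat_add_iff 1).2 hu
  have hsum : Summable fun n : ℕ => ((n.factorial : ℂ))⁻¹ • (c • p) ^ n :=
    expSeries_summable' (𝕂 := ℂ) (c • p)
  have hexpc : Complex.exp c = 1 + ∑' n : ℕ, ((n + 1).factorial : ℂ)⁻¹ * c ^ (n + 1) := by
    have h := Summable.tsum_eq_zero_add hu
    simp only [pow_zero, Nat.factorial_zero, Nat.cast_one, inv_one, one_mul] at h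
    rw [Complex.exp_eq_exp_ℂ, exp_eq_tsum ℂ]
    simpa [smul_eq_mul] using h
  simp only [exp_eq_tsum ℂ]
  rw [Summable.tsum_eq_zero_add hsum]
  have h1 : ∀ n : ℕ, ((n + 1).factorial : ℂ)⁻¹ • (c • p) ^ (n + 1)
      = (((n + 1).factorial : ℂ)⁻¹ * c ^ (n + 1)) • p := by
    intro n
    rw [smul_pow, pow_idem hp, smul_smul]
  simp only [h1]
  rw [Summable.tsum_smul_const hu1, hexpc]
  simp

private lemma exp_sq_zero {n : M2} (hn : n * n = 0) : exp n = 1 + n := by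
  simp only [exp_eq_tsum ℂ]
  rw [tsum_eq_sum (s := ({0, 1} : Finset ℕ)) ?_]
  · norm_num [Finset.sum_pair]
  · intro k hk
    simp only [Finset.mem_insert, Finset.mem_singleton] at hk
    obtain ⟨m, rfl⟩ : ∃ m, k = m + 2 := ⟨k - 2, by omega⟩
    rw [pow_add, sq, hn, mul_zero, smul_zero]

private lemma sq_eq_trace_smul_sub {R : Type*} [CommRing R] (M : Matrix (Fin 2) (Fin 2) R) :
    M * M = M.trace • M - M.det • 1 := by
  ext i j
  fin_cases i <;> fin_cases j <;>
    simp [Matrix.mul_apply, Fin.sum_univ_two, Matrix.trace_fin_two, Matrix.det_fin_two,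
      Matrix.one_apply] <;> ring

private lemma exp_map_ofReal' (a : Matrix (Fin 2) (Fin 2) ℝ) :
    (exp a).map (algebraMap ℝ ℂ) = exp (a.map (algebraMap ℝ ℂ)) := by
  open scoped Norms.Operator in
  have h1 := map_exp
      (RingHom.mapMatrix (algebraMap ℝ ℂ))
      (Continuous.matrix_map continuous_id (continuous_algebraMap ℝ ℂ)) a
  exact h1

/-- For a Lorentzian inner product `g(u,v) = uᵀGv` on `ℝ²` and a `g`-symmetric
matrix `A` with `det A = 1`, `tr A = -2` and `A ≠ -1`, there is no `g`-symmetric matrix `a`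
with `exp a = A` (no geodesic joins `g` and `g(A·,·)`). -/
theorem no_geodesic_of_trace_eq_neg_two (G A : Matrix (Fin 2) (Fin 2) ℝ)
    (hGsymm : Gᵀ = G) (hGdet : G.det < 0)
    (hAsymm : Aᵀ * G = G * A) (hAdet : A.det = 1)
    (htr : A.trace = -2) (hA : A ≠ -1) :
    ¬ ∃ a : Matrix (Fin 2) (Fin 2) ℝ, aᵀ * G = G * a ∧ exp a = A := by
  rintro ⟨a, -, hexpa⟩
  classical
  set b : M2 := a.map (algebraMap ℝ ℂ) with hb
  have hmap : exp b = A.map (algebraMap ℝ ℂ) := by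
    rw [← hexpa, exp_map_ofReal' a]
  set τ : ℂ := b.trace with hτdef
  set δ : ℂ := b.det with hδdef
  have hτ : τ = (a.trace : ℂ) := by
    simp [hτdef, hb, Matrix.trace, Matrix.diag, Matrix.map_apply]
  have htrexp : (exp b).trace = -2 := by
    rw [hmap]
    have : (A.map (algebraMap ℝ ℂ)).trace = ((A.trace : ℝ) : ℂ) := by
      simp [Matrix.trace, Matrix.diag, Matrix.map_apply]
    rw [this, htr]
    norm_num
  have hdetexp : (exp b).det = 1 := by
    rw [hmap, ← RingHom.mapMatrix_apply, ← RingHom.map_det, hAdet]; exact map_one (algebraMap ℝ ℂ)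
  have hCH : b * b = τ • b - δ • 1 := sq_eq_trace_smul_sub b
  have expand : ∀ x y z w : ℂ, (x • (1 : M2) + y • b) * (z • (1 : M2) + w • b)
      = (x * z - y * w * δ) • (1 : M2) + (x * w + y * z + y * w * τ) • b := by
    intro x y z w
    simp only [add_mul, mul_add, smul_mul_assoc, mul_smul_comm, one_mul, mul_one, hCH]
    module
  have hdetlin : ∀ u v : ℂ, (u • (1 : M2) + v • b).det = u ^ 2 + u * v * τ + v ^ 2 * δ := by
    intro u v
    rw [hτdef, hδdef, Matrix.trace_fin_two, Matrix.det_fin_two, Matrix.det_fin_two]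
    simp [Matrix.add_apply, Matrix.smul_apply, Matrix.one_apply]
    ring
  obtain ⟨s, hs⟩ := IsAlgClosed.exists_pow_nat_eq (τ ^ 2 - 4 * δ) (n := 2) two_pos
  by_cases hs0 : s = 0
  · have hδ4 : τ ^ 2 = 4 * δ := by
      rw [hs0] at hs
      linear_combination -hs
    set m : M2 := b - (τ / 2) • 1 with hm
    have hm' : m = (-(τ / 2)) • (1 : M2) + (1 : ℂ) • b := by rw [hm]; module
    have hmm : m * m = 0 := by
      rw [hm', expand,
        show (-(τ/2)) * (-(τ/2)) - 1 * 1 * δ = 0 by linear_combination hδ4 / 4,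
        show (-(τ/2)) * 1 + 1 * (-(τ/2)) + 1 * 1 * τ = 0 by ring]
      simp
    have hbsplit : b = (τ / 2) • (1 : M2) + m := by rw [hm]; module
    have hcomm : Commute ((τ / 2) • (1 : M2)) m := (Commute.one_left m).smul_left _
    have h1 : exp ((τ / 2) • (1 : M2)) = Complex.exp (τ / 2) • (1 : M2) := by
      rw [exp_smul_idem (by rw [one_mul] : (1 : M2) * 1 = 1)]
      module
    have hsplit : exp b = Complex.exp (τ / 2) • (1 + m) := by
      rw [hbsplit, Matrix.exp_add_of_commute _ _ hcomm, exp_sq_zero hmm, h1,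
        smul_mul_assoc, one_mul]
    have htrm : m.trace = 0 := by
      rw [hm, Matrix.trace_sub, Matrix.trace_smul, Matrix.trace_one, ← hτdef]
      simp [smul_eq_mul]
    have h2 : Complex.exp (τ / 2) * 2 = -2 := by
      have h := htrexp
      rw [hsplit, Matrix.trace_smul, Matrix.trace_add, Matrix.trace_one, htrm,
        smul_eq_mul] at h
      simp at h
      exact h
    have h3 : Complex.exp (((a.trace / 2 : ℝ)) : ℂ) = -1 := by
      rw [show ((a.trace / 2 : ℝ) : ℂ) = τ / 2 by rw [hτ]; push_cast; ring]
      linear_combination h2 / 2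
    rw [← Complex.ofReal_exp] at h3
    have h4 : Real.exp (a.trace / 2) = -1 := by exact_mod_cast h3
    nlinarith [Real.exp_pos (a.trace / 2)]
  · replace hs0 : s ≠ 0 := hs0
    have hδs : δ = (τ ^ 2 - s ^ 2) / 4 := by linear_combination hs / 4
    set E1 : ℂ := Complex.exp ((τ + s) / 2) with hE1
    set E2 : ℂ := Complex.exp ((τ - s) / 2) with hE2
    set p : M2 := ((s - τ) / (2 * s)) • (1 : M2) + s⁻¹ • b with hp
    set q : M2 := ((s + τ) / (2 * s)) • (1 : M2) + (-(s⁻¹)) • b with hq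
    have hpp : p * p = p := by
      rw [hp, expand,
        show ((s - τ)/(2*s)) * ((s - τ)/(2*s)) - s⁻¹ * s⁻¹ * δ = (s - τ)/(2*s) by
          rw [hδs]; field_simp; ring,
        show ((s - τ)/(2*s)) * s⁻¹ + s⁻¹ * ((s - τ)/(2*s)) + s⁻¹ * s⁻¹ * τ = s⁻¹ by
          field_simp; ring]
    have hqq : q * q = q := by
      rw [hq, expand,
        show ((s + τ)/(2*s)) * ((s + τ)/(2*s)) - (-(s⁻¹)) * (-(s⁻¹)) * δ = (s + τ)/(2*s) by
          rw [hδs]; field_simp; ring,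
        show ((s + τ)/(2*s)) * (-(s⁻¹)) + (-(s⁻¹)) * ((s + τ)/(2*s)) + (-(s⁻¹)) * (-(s⁻¹)) * τ
            = -(s⁻¹) by
          have hx : ((s + τ)/(2*s)) * s⁻¹ + s⁻¹ * ((s + τ)/(2*s)) - s⁻¹ * s⁻¹ * τ = s⁻¹ := by
            field_simp; ring
          linear_combination -hx]
    have hpq : p * q = 0 := by
      rw [hp, hq, expand,
        show ((s - τ)/(2*s)) * ((s + τ)/(2*s)) - s⁻¹ * (-(s⁻¹)) * δ = 0 by
          rw [hδs]; field_simp; ring,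
        show ((s - τ)/(2*s)) * (-(s⁻¹)) + s⁻¹ * ((s + τ)/(2*s)) + s⁻¹ * (-(s⁻¹)) * τ = 0 by
          field_simp; ring]
      simp
    have hqp : q * p = 0 := by
      rw [hp, hq, expand,
        show ((s + τ)/(2*s)) * ((s - τ)/(2*s)) - (-(s⁻¹)) * s⁻¹ * δ = 0 by
          rw [hδs]; field_simp; ring,
        show ((s + τ)/(2*s)) * s⁻¹ + (-(s⁻¹)) * ((s - τ)/(2*s)) + (-(s⁻¹)) * s⁻¹ * τ = 0 by
          field_simp; ring]
      simp
    have hbpq : b = ((τ + s) / 2) • p + ((τ - s) / 2) • q := by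
      have h0 : ((τ + s) / 2) • p + ((τ - s) / 2) • q
          = (((τ + s) / 2) * ((s - τ)/(2*s)) + ((τ - s) / 2) * ((s + τ)/(2*s))) • (1 : M2)
            + (((τ + s) / 2) * s⁻¹ + ((τ - s) / 2) * (-(s⁻¹))) • b := by
        rw [hp, hq]; module
      rw [h0,
        show ((τ + s) / 2) * ((s - τ)/(2*s)) + ((τ - s) / 2) * ((s + τ)/(2*s)) = 0 by
          field_simp; ring,
        show ((τ + s) / 2) * s⁻¹ + ((τ - s) / 2) * (-(s⁻¹)) = 1 by field_simp; ring]
      simp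
    have hcomm : Commute (((τ + s) / 2) • p) (((τ - s) / 2) • q) := by
      show _ * _ = _ * _
      rw [smul_mul_assoc, mul_smul_comm, hpq, smul_mul_assoc, mul_smul_comm, hqp]
      simp
    have hexpb : exp b = 1 + (E1 - 1) • p + (E2 - 1) • q := by
      rw [hbpq, Matrix.exp_add_of_commute _ _ hcomm, exp_smul_idem hpp, exp_smul_idem hqq,
        ← hE1, ← hE2]
      rw [mul_add, mul_one, add_mul, one_mul, smul_mul_assoc, mul_smul_comm, hpq]
      simp
    set U : ℂ := ((τ + s) * E2 - (τ - s) * E1) / (2 * s) with hU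
    set V : ℂ := (E1 - E2) / s with hV
    have hUV : exp b = U • (1 : M2) + V • b := by
      rw [hexpb]
      have h0 : (1 : M2) + (E1 - 1) • p + (E2 - 1) • q
          = (1 + (E1 - 1) * ((s - τ)/(2*s)) + (E2 - 1) * ((s + τ)/(2*s))) • (1 : M2)
            + ((E1 - 1) * s⁻¹ + (E2 - 1) * (-(s⁻¹))) • b := by
        rw [hp, hq]; module
      rw [h0,
        show 1 + (E1 - 1) * ((s - τ)/(2*s)) + (E2 - 1) * ((s + τ)/(2*s)) = U by
          rw [hU]; field_simp; ring,
        show (E1 - 1) * s⁻¹ + (E2 - 1) * (-(s⁻¹)) = V by rw [hV]; field_simp; ring]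
    have htreq : U * 2 + V * τ = -2 := by
      have h := htrexp
      rw [hUV, Matrix.trace_add, Matrix.trace_smul, Matrix.trace_smul, Matrix.trace_one,
        ← hτdef, smul_eq_mul, smul_eq_mul] at h
      simp at h
      linear_combination h
    have hdeteq : U ^ 2 + U * V * τ + V ^ 2 * δ = 1 := by
      have h := hdetexp
      rw [hUV, hdetlin] at h
      exact h
    have hEsum : E1 + E2 = -2 := by
      have h := htreq
      rw [hU, hV] at h
      field_simp at h
      have h4 : (2 * s ^ 2) * (E1 + E2 + 2) = 0 := by linear_combination 2 * s * h
      have h5 := (mul_eq_zero.1 h4).resolve_left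
        (mul_ne_zero two_ne_zero (pow_ne_zero _ hs0))
      linear_combination h5
    have hEprod : E1 * E2 = 1 := by
      have h := hdeteq
      rw [hU, hV, hδs] at h
      field_simp at h
      have h4 : (16 * s ^ 2) * (E1 * E2 - 1) = 0 := by linear_combination h
      have h5 := (mul_eq_zero.1 h4).resolve_left
        (mul_ne_zero (by norm_num) (pow_ne_zero _ hs0))
      linear_combination h5
    have hE1 : E1 = -1 := by
      have h0 : (E1 + 1) ^ 2 = 0 := by linear_combination E1 * hEsum - hEprod
      have h1 := sq_eq_zero_iff.1 h0
      linear_combination h1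
    have hE2 : E2 = -1 := by linear_combination hEsum - hE1
    have hV0 : V = 0 := by rw [hV, hE1, hE2]; simp
    have hU1 : U = -1 := by rw [hU, hE1, hE2]; field_simp; ring
    have hexpb1 : exp b = -1 := by
      rw [hUV, hV0, hU1]
      simp
    apply hA
    have hAm : A.map (algebraMap ℝ ℂ) = -1 := by rw [← hmap, hexpb1]
    ext i j
    have h : A.map (algebraMap ℝ ℂ) i j = (-1 : M2) i j := by rw [hAm]
    simp only [Matrix.map_apply, Matrix.neg_apply, Matrix.one_apply] at h ⊢
    by_cases hij : i = j <;> simp [hij] at h ⊢ <;> exact_mod_cast h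
end

section
/- Let x be a real square matrix (of any size) with x³ = 0 and let k > 0 be a real number. Then for every t ∈ ℝ, exp(t((log k)·1 + x − ½x²)) = k^t (1 + t·x + ½t(t−1)·x²). In particular, taking t = 1, k(1 + x) = exp((log k)·1 + x − ½x²), so the curve B_t := k^t(1 + tx + ½t(t−1)x²) satisfies B₀ = 1, B₁ = k(1+x) and is a one-parameter group of the stated exponential form. -/
open Matrix NormedSpace

lemma exp_nilpotent3 {d : ℕ} (m : Matrix (Fin d) (Fin d) ℝ) (hm : m ^ 3 = 0) :
    exp m = 1 + m + (2 : ℝ)⁻¹ • m ^ 2 := by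
  have := congrFun (exp_eq_tsum (𝕂 := ℝ) (𝔸 := Matrix (Fin d) (Fin d) ℝ)) m
  rw [this]
  rw [tsum_eq_sum (s := Finset.range 3) (fun n hn => by
    have h3 : 3 ≤ n := by simpa using hn
    rw [pow_eq_zero_of_le h3 hm, smul_zero])]
  simp [Finset.sum_range_succ]

lemma exp_smul_one {d : ℕ} (a : ℝ) :
    exp (a • (1 : Matrix (Fin d) (Fin d) ℝ)) = Real.exp a • 1 := by
  rw [Matrix.smul_one_eq_diagonal, Matrix.exp_diagonal, Pi.exp_def,
    Real.exp_eq_exp_ℝ, ← Matrix.smul_one_eq_diagonal]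

/-- If `x` is a real square matrix with `x³ = 0` and `k > 0`, then for all real
`t`, `exp(t((log k)·1 + x - ½x²)) = k^t (1 + t·x + ½t(t-1)·x²)`; in particular for `t = 1`,
`k(1 + x) = exp((log k)·1 + x - ½x²)`. -/
theorem exp_of_log_nilpotent {d : ℕ} (x : Matrix (Fin d) (Fin d) ℝ) (hx : x ^ 3 = 0)
    (k : ℝ) (hk : 0 < k) :
    (∀ t : ℝ,
      exp (t • (Real.log k • (1 : Matrix (Fin d) (Fin d) ℝ) + x - (1 / 2 : ℝ) • x ^ 2)) =
        (k ^ t) • ((1 : Matrix (Fin d) (Fin d) ℝ) + t • x + (t * (t - 1) / 2) • x ^ 2)) ∧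
    k • ((1 : Matrix (Fin d) (Fin d) ℝ) + x) =
      exp (Real.log k • (1 : Matrix (Fin d) (Fin d) ℝ) + x - (1 / 2 : ℝ) • x ^ 2) := by
  set n : Matrix (Fin d) (Fin d) ℝ := x - (1 / 2 : ℝ) • x ^ 2 with hn
  have hx4 : x ^ 4 = 0 := pow_eq_zero_of_le (by norm_num) hx
  have h1 : x * x ^ 2 = 0 := by rw [← pow_succ']; exact hx
  have h2 : x ^ 2 * x = 0 := by rw [← pow_succ]; exact hx
  have h4 : x ^ 2 * x ^ 2 = 0 := by rw [← pow_add]; exact hx4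
  have hn2 : n ^ 2 = x ^ 2 := by
    have e2 : x * x * x = 0 := by simpa [pow_succ] using hx
    have e1 : x * (x * x) = 0 := by rw [← mul_assoc]; exact e2
    have e3 : x * x * (x * x) = 0 := by rw [← mul_assoc, e2, zero_mul]
    rw [hn, sq, sub_mul, mul_sub, mul_sub]
    simp [smul_mul_assoc, mul_smul_comm, e1, e2, e3, sq]
  have hn3 : n ^ 3 = 0 := by
    rw [pow_succ, hn2, hn, mul_sub, mul_smul_comm, h4, h2]
    simp
  have key : ∀ t : ℝ,
      exp (t • (Real.log k • (1 : Matrix (Fin d) (Fin d) ℝ) + x - (1 / 2 : ℝ) • x ^ 2)) =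
        (k ^ t) • ((1 : Matrix (Fin d) (Fin d) ℝ) + t • x + (t * (t - 1) / 2) • x ^ 2) := by
    intro t
    have hsplit : t • (Real.log k • (1 : Matrix (Fin d) (Fin d) ℝ) + x - (1 / 2 : ℝ) • x ^ 2)
        = (t * Real.log k) • (1 : Matrix (Fin d) (Fin d) ℝ) + t • n := by
      rw [hn]; module
    have hcomm : Commute ((t * Real.log k) • (1 : Matrix (Fin d) (Fin d) ℝ)) (t • n) :=
      ((Commute.one_left (t • n)).smul_left _)
    have htn3 : (t • n) ^ 3 = 0 := by rw [smul_pow, hn3, smul_zero]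
    rw [hsplit, Matrix.exp_add_of_commute _ _ hcomm, exp_smul_one, exp_nilpotent3 _ htn3,
      smul_pow, hn2]
    have hkt : Real.exp (t * Real.log k) = k ^ t := by
      rw [Real.rpow_def_of_pos hk, mul_comm]
    rw [smul_mul_assoc, one_mul, hkt]
    congr 1
    rw [hn]
    module
  refine ⟨key, ?_⟩
  have h1 := key 1
  rw [one_smul] at h1
  rw [h1, Real.rpow_one]
  norm_num
end
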